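/- Let f be L-smooth and g proper lsc with argmin(f+g) ≠ ∅, and γ < 1/L. Then inf (f+g) = inf φ_γ^{DR} and argmin(f+g) = prox_{γf}(argmin φ_γ^{DR}), where φ_γ^{DR} is the Douglas–Rachford envelope. -/

import Mathlib

open Set Filter

lemma DRE_descent {n : ℕ} (f : EuclideanSpace ℝ (Fin n) → ℝ) (L : ℝ)
    (hC1 : ContDiff ℝ 1 f)
    (hLip : ∀ x y, ‖gradient f x - gradient f y‖ ≤ L * ‖x - y‖)
    (x y : EuclideanSpace ℝ (Fin n)) :
    |f y - f x - (inner ℝ (gradient f x) (y - x) : ℝ)| ≤ L / 2 * ‖y - x‖ ^ 2 := by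
  rw [abs_le]
  set v := y - x with hv
  have hy : y = x + (1:ℝ) • v := by simp [hv]
  have hdf : ∀ p, HasGradientAt f (gradient f p) p := fun p =>
    ((hC1.differentiable one_ne_zero) p).hasGradientAt
  have key : ∀ t : ℝ, HasDerivAt (fun t : ℝ => f (x + t • v))
      (inner ℝ (gradient f (x + t • v)) v : ℝ) t := by
    intro t
    have hc : HasDerivAt (fun t : ℝ => x + t • v) v t := by
      simpa using ((hasDerivAt_id t).smul_const v).const_add x
    have := ((hdf (x + t • v)).hasFDerivAt).comp_hasDerivAt t hc
    exact this.congr_deriv (by simp [InnerProductSpace.toDual_apply_apply])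
  set a : ℝ := inner ℝ (gradient f x) v with ha
  have hbound : ∀ t ∈ Set.Ioo (0:ℝ) 1,
      |(inner ℝ (gradient f (x + t • v)) v : ℝ) - a| ≤ L * t * ‖v‖ ^ 2 := by
    intro t ht
    have h1 : (inner ℝ (gradient f (x + t • v)) v : ℝ) - a
        = inner ℝ (gradient f (x + t • v) - gradient f x) v := by
      rw [inner_sub_left]
    rw [h1]
    calc |(inner ℝ (gradient f (x + t • v) - gradient f x) v : ℝ)|
        ≤ ‖gradient f (x + t • v) - gradient f x‖ * ‖v‖ := abs_real_inner_le_norm _ _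
      _ ≤ (L * ‖(x + t • v) - x‖) * ‖v‖ := by
          gcongr; exact hLip _ _
      _ = L * t * ‖v‖ ^ 2 := by
          rw [add_sub_cancel_left, norm_smul, Real.norm_eq_abs, abs_of_pos ht.1]; ring
  have hderiv : ∀ (c : ℝ) (t : ℝ), HasDerivAt
      (fun t : ℝ => f (x + t • v) - t * a + c * ‖v‖ ^ 2 * t ^ 2)
      ((inner ℝ (gradient f (x + t • v)) v : ℝ) - a + 2 * c * ‖v‖ ^ 2 * t) t := by
    intro c t
    have h2 : HasDerivAt (fun t : ℝ => c * ‖v‖ ^ 2 * t ^ 2) (2 * c * ‖v‖ ^ 2 * t) t := by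
      have := (hasDerivAt_pow 2 t).const_mul (c * ‖v‖ ^ 2)
      refine this.congr_deriv ?_
      push_cast
      ring
    have := ((key t).sub ((hasDerivAt_id t).mul_const a)).add h2
    refine this.congr_deriv ?_
    ring
  have habs : L / 2 * ‖y - x‖ ^ 2 = L / 2 * ‖v‖ ^ 2 := by rw [hv]
  rw [habs]
  have h0mem : (0:ℝ) ∈ Set.Icc (0:ℝ) 1 := by norm_num
  have h1mem : (1:ℝ) ∈ Set.Icc (0:ℝ) 1 := by norm_num
  constructor
  · -- lower bound : -(L/2 ‖v‖²) ≤ f y - f x - a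
    have hmono : MonotoneOn (fun t : ℝ => f (x + t • v) - t * a + (L/2) * ‖v‖ ^ 2 * t ^ 2)
        (Set.Icc 0 1) := by
      apply monotoneOn_of_deriv_nonneg (convex_Icc 0 1)
      · exact Continuous.continuousOn
          (((hC1.continuous.comp (continuous_const.add (continuous_id.smul continuous_const))).sub
            (continuous_id.mul continuous_const)).add (continuous_const.mul (continuous_pow 2)))
      · intro t ht
        exact (hderiv (L/2) t).differentiableAt.differentiableWithinAt
      · intro t ht
        rw [interior_Icc] at ht
        rw [(hderiv (L/2) t).deriv]
        have hb := hbound t ht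
        have := neg_abs_le ((inner ℝ (gradient f (x + t • v)) v : ℝ) - a)
        have ht0 := ht.1
        nlinarith [sq_nonneg ‖v‖]
    have := hmono h0mem h1mem zero_le_one
    simp only [zero_smul, add_zero, zero_mul, sub_zero, one_smul, one_mul, mul_one,
      one_pow, mul_zero] at this
    rw [show x + v = y by simp [hv]] at this
    nlinarith
  · -- upper bound
    have hmono : AntitoneOn (fun t : ℝ => f (x + t • v) - t * a + (-(L/2)) * ‖v‖ ^ 2 * t ^ 2)
        (Set.Icc 0 1) := by
      apply antitoneOn_of_deriv_nonpos (convex_Icc 0 1)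
      · exact Continuous.continuousOn
          (((hC1.continuous.comp (continuous_const.add (continuous_id.smul continuous_const))).sub
            (continuous_id.mul continuous_const)).add (continuous_const.mul (continuous_pow 2)))
      · intro t ht
        exact (hderiv (-(L/2)) t).differentiableAt.differentiableWithinAt
      · intro t ht
        rw [interior_Icc] at ht
        rw [(hderiv (-(L/2)) t).deriv]
        have hb := hbound t ht
        have := le_abs_self ((inner ℝ (gradient f (x + t • v)) v : ℝ) - a)
        have ht0 := ht.1
        nlinarith [sq_nonneg ‖v‖]
    have := hmono h0mem h1mem zero_le_one
    simp only [zero_smul, add_zero, zero_mul, sub_zero, one_smul, one_mul, mul_one,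
      one_pow, mul_zero] at this
    rw [show x + v = y by simp [hv]] at this
    nlinarith

theorem DRE_inf_and_argmin_equiv {n : ℕ} (f : EuclideanSpace ℝ (Fin n) → ℝ)
    (g : EuclideanSpace ℝ (Fin n) → EReal) (L γ : ℝ) (hL : 0 < L)
    (hC1 : ContDiff ℝ 1 f)
    (hLip : ∀ x y, ‖gradient f x - gradient f y‖ ≤ L * ‖x - y‖)
    (hgproper : ∃ x, g x ≠ ⊤) (hgbot : ∀ x, g x ≠ ⊥) (hglsc : LowerSemicontinuous g)
    (hγ0 : 0 < γ) (hγ : γ < 1 / L)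
    (hargmin : {x | IsMinOn (fun x => ((f x : ℝ) : EReal) + g x) Set.univ x}.Nonempty)
    (pf : EuclideanSpace ℝ (Fin n) → EuclideanSpace ℝ (Fin n))
    (hpf : ∀ s, IsMinOn (fun w => f w + 1 / (2 * γ) * ‖w - s‖ ^ 2) Set.univ (pf s)) :
    (⨅ x, (((f x : ℝ) : EReal) + g x)) =
      (⨅ s, ⨅ w, (g w + ((f (pf s) + (inner ℝ (gradient f (pf s)) (w - pf s) : ℝ)
        + 1 / (2 * γ) * ‖w - pf s‖ ^ 2 : ℝ) : EReal))) ∧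
    {x | IsMinOn (fun x => ((f x : ℝ) : EReal) + g x) Set.univ x} =
      pf '' {s | IsMinOn (fun s => ⨅ w, (g w + ((f (pf s)
        + (inner ℝ (gradient f (pf s)) (w - pf s) : ℝ)
        + 1 / (2 * γ) * ‖w - pf s‖ ^ 2 : ℝ) : EReal))) Set.univ s} := by
  have hD := DRE_descent f L hC1 hLip
  have hγL : γ * L < 1 := (lt_div_iff₀ hL).mp hγ
  set μ2 : ℝ := 1 / (2 * γ) - L / 2 with hμ2def
  clear_value μ2
  have hμ2 : 0 < μ2 := by
    rw [hμ2def, sub_pos, div_lt_div_iff₀ (by norm_num) (by positivity)]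
    nlinarith
  -- strong minimality of stationary points of the prox subproblem
  have hstat_strong : ∀ x y : EuclideanSpace ℝ (Fin n),
      f x + 1 / (2 * γ) * ‖x - (x + γ • gradient f x)‖ ^ 2 + μ2 * ‖y - x‖ ^ 2 ≤
        f y + 1 / (2 * γ) * ‖y - (x + γ • gradient f x)‖ ^ 2 := by
    intro x y
    have h := (abs_le.mp (hD x y)).1
    have e1 : ‖x - (x + γ • gradient f x)‖ ^ 2 = ‖γ • gradient f x‖ ^ 2 := by
      rw [sub_add_cancel_left, norm_neg]
    have e2 : ‖y - (x + γ • gradient f x)‖ ^ 2 =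
        ‖y - x‖ ^ 2 - 2 * (γ * (inner ℝ (gradient f x) (y - x) : ℝ)) +
          ‖γ • gradient f x‖ ^ 2 := by
      rw [sub_add_eq_sub_sub, norm_sub_sq_real, real_inner_smul_right,
        real_inner_comm]
    rw [e1, e2]
    have hc : 1 / (2 * γ) * (2 * γ) = 1 := by field_simp
    have expand : 1 / (2 * γ) *
        (‖y - x‖ ^ 2 - 2 * (γ * (inner ℝ (gradient f x) (y - x) : ℝ)) +
          ‖γ • gradient f x‖ ^ 2) =
        1 / (2 * γ) * ‖y - x‖ ^ 2 - (1 / (2 * γ) * (2 * γ)) *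
          (inner ℝ (gradient f x) (y - x) : ℝ) + 1 / (2 * γ) * ‖γ • gradient f x‖ ^ 2 := by
      ring
    rw [expand, hc, hμ2def]
    linarith
  have hpf_stat : ∀ x, pf (x + γ • gradient f x) = x := by
    intro x
    have h1 := isMinOn_iff.mp (hpf (x + γ • gradient f x)) x (mem_univ x)
    have h2 := hstat_strong x (pf (x + γ • gradient f x))
    have h5 : μ2 * ‖pf (x + γ • gradient f x) - x‖ ^ 2 ≤ 0 := by linarith
    have h6 := mul_nonneg hμ2.le (sq_nonneg ‖pf (x + γ • gradient f x) - x‖)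
    have h7 : ‖pf (x + γ • gradient f x) - x‖ ^ 2 = 0 :=
      (mul_eq_zero.mp (le_antisymm h5 h6)).resolve_left hμ2.ne'
    have h4 : ‖pf (x + γ • gradient f x) - x‖ = 0 := by
      nlinarith [norm_nonneg (pf (x + γ • gradient f x) - x)]
    exact sub_eq_zero.mp (norm_eq_zero.mp h4)
  -- quadratic model dominates f
  have hmodel_ge_strong : ∀ s w, f w + μ2 * ‖w - pf s‖ ^ 2 ≤
      f (pf s) + (inner ℝ (gradient f (pf s)) (w - pf s) : ℝ)
        + 1 / (2 * γ) * ‖w - pf s‖ ^ 2 := by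
    intro s w
    have h := (abs_le.mp (hD (pf s) w)).2
    rw [hμ2def]
    linarith
  have hmodel_ge : ∀ s w, f w ≤
      f (pf s) + (inner ℝ (gradient f (pf s)) (w - pf s) : ℝ)
        + 1 / (2 * γ) * ‖w - pf s‖ ^ 2 := by
    intro s w
    have := hmodel_ge_strong s w
    nlinarith [mul_nonneg hμ2.le (sq_nonneg ‖w - pf s‖)]
  have hmodel_self : ∀ x, f (pf (x + γ • gradient f x))
      + (inner ℝ (gradient f (pf (x + γ • gradient f x)))
          (x - pf (x + γ • gradient f x)) : ℝ)
      + 1 / (2 * γ) * ‖x - pf (x + γ • gradient f x)‖ ^ 2 = f x := by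
    intro x
    rw [hpf_stat x]
    simp
  obtain ⟨x₀, hx₀⟩ := hargmin
  simp only [mem_setOf_eq] at hx₀
  set m : EReal := ⨅ x, (((f x : ℝ) : EReal) + g x) with hm
  have hmle : ∀ y, m ≤ ((f y : ℝ) : EReal) + g y := fun y => iInf_le _ y
  have hminle : ∀ y, ((f x₀ : ℝ) : EReal) + g x₀ ≤ ((f y : ℝ) : EReal) + g y :=
    fun y => isMinOn_iff.mp hx₀ y (mem_univ y)
  have hm_eq : m = ((f x₀ : ℝ) : EReal) + g x₀ := le_antisymm (hmle x₀) (le_iInf hminle)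
  obtain ⟨x₁, hx₁⟩ := hgproper
  have hgx₀top : g x₀ ≠ ⊤ := by
    intro h
    have h2 := hminle x₁
    rw [h, EReal.coe_add_top] at h2
    have h3 := top_le_iff.mp h2
    obtain ⟨r1, hr1⟩ : ∃ r : ℝ, g x₁ = (r : EReal) :=
      ⟨(g x₁).toReal, (EReal.coe_toReal hx₁ (hgbot x₁)).symm⟩
    rw [hr1, ← EReal.coe_add] at h3
    exact EReal.coe_ne_top _ h3
  obtain ⟨r0, hr0⟩ : ∃ r : ℝ, g x₀ = (r : EReal) :=
    ⟨(g x₀).toReal, (EReal.coe_toReal hgx₀top (hgbot x₀)).symm⟩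
  have hm' : m = ((f x₀ + r0 : ℝ) : EReal) := by rw [hm_eq, hr0, EReal.coe_add]
  -- pointwise lower bound for the DRE integrand
  have hA : ∀ s w, m ≤ g w + ((f (pf s) + (inner ℝ (gradient f (pf s)) (w - pf s) : ℝ)
      + 1 / (2 * γ) * ‖w - pf s‖ ^ 2 : ℝ) : EReal) := by
    intro s w
    calc m ≤ ((f w : ℝ) : EReal) + g w := hmle w
      _ = g w + ((f w : ℝ) : EReal) := add_comm _ _
      _ ≤ _ := add_le_add_right (EReal.coe_le_coe_iff.mpr (hmodel_ge s w)) _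
  have hB : ∀ s, m ≤ ⨅ w, (g w + ((f (pf s) + (inner ℝ (gradient f (pf s)) (w - pf s) : ℝ)
      + 1 / (2 * γ) * ‖w - pf s‖ ^ 2 : ℝ) : EReal)) := fun s => le_iInf (hA s)
  have hC : ∀ x, (⨅ w, (g w + ((f (pf (x + γ • gradient f x))
      + (inner ℝ (gradient f (pf (x + γ • gradient f x))) (w - pf (x + γ • gradient f x)) : ℝ)
      + 1 / (2 * γ) * ‖w - pf (x + γ • gradient f x)‖ ^ 2 : ℝ) : EReal)))
      ≤ ((f x : ℝ) : EReal) + g x := by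
    intro x
    have h1 := iInf_le (fun w => (g w + ((f (pf (x + γ • gradient f x))
      + (inner ℝ (gradient f (pf (x + γ • gradient f x))) (w - pf (x + γ • gradient f x)) : ℝ)
      + 1 / (2 * γ) * ‖w - pf (x + γ • gradient f x)‖ ^ 2 : ℝ) : EReal))) x
    rw [hmodel_self x] at h1
    exact h1.trans_eq (add_comm _ _)
  constructor
  · refine le_antisymm (le_iInf hB) ?_
    rw [hm]
    exact le_iInf fun x => iInf_le_of_le (x + γ • gradient f x) (hC x)
  · ext z
    simp only [mem_setOf_eq, mem_image]
    constructor
    · intro hz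
      refine ⟨z + γ • gradient f z, ?_, hpf_stat z⟩
      have hzm : ((f z : ℝ) : EReal) + g z ≤ m := by
        rw [hm]; exact le_iInf fun y => isMinOn_iff.mp hz y (mem_univ y)
      exact isMinOn_iff.mpr fun s' _ => (hC z).trans (hzm.trans (hB s'))
    · rintro ⟨s, hs, rfl⟩
      have hφs_le : (⨅ w, (g w + ((f (pf s) + (inner ℝ (gradient f (pf s)) (w - pf s) : ℝ)
          + 1 / (2 * γ) * ‖w - pf s‖ ^ 2 : ℝ) : EReal))) ≤ m := by
        have h1 := isMinOn_iff.mp hs (x₀ + γ • gradient f x₀) (mem_univ _)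
        refine h1.trans ((hC x₀).trans ?_)
        rw [hm_eq]
      have hφs : (⨅ w, (g w + ((f (pf s) + (inner ℝ (gradient f (pf s)) (w - pf s) : ℝ)
          + 1 / (2 * γ) * ‖w - pf s‖ ^ 2 : ℝ) : EReal))) = m := le_antisymm hφs_le (hB s)
      have hkey : ((f (pf s) : ℝ) : EReal) + g (pf s) ≤ m := by
        by_contra hcon
        have hlt : m < ((f (pf s) : ℝ) : EReal) + g (pf s) := not_le.mp hcon
        obtain ⟨c, hc1, hc2⟩ := exists_between hlt
        have hcbot : c ≠ ⊥ := by intro h; rw [h] at hc1; exact not_lt_bot hc1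
        have hctop : c ≠ ⊤ := by intro h; rw [h] at hc2; exact not_top_lt hc2
        obtain ⟨r, hr⟩ : ∃ r : ℝ, c = (r : EReal) := ⟨c.toReal, (EReal.coe_toReal hctop hcbot).symm⟩
        rw [hr] at hc1 hc2
        have hm'r : f x₀ + r0 < r := by
          rw [hm'] at hc1; exact EReal.coe_lt_coe_iff.mp hc1
        have hgu : ((r - f (pf s) : ℝ) : EReal) < g (pf s) := by
          by_contra hle
          have hle' := not_lt.mp hle
          have h2 : ((f (pf s) : ℝ) : EReal) + g (pf s) ≤
              ((f (pf s) : ℝ) : EReal) + ((r - f (pf s) : ℝ) : EReal) := add_le_add_right hle' _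
          rw [← EReal.coe_add] at h2
          have h3 : (f (pf s) + (r - f (pf s)) : ℝ) = r := by ring
          rw [h3] at h2
          exact absurd hc2 (not_lt.mpr h2)
        have hev1 := hglsc (pf s) _ hgu
        have hδ : (0:ℝ) < (r - (f x₀ + r0)) / 2 := by linarith
        have hev2 : ∀ᶠ w in nhds (pf s), f (pf s) - (r - (f x₀ + r0)) / 2 < f w :=
          (hC1.continuous.continuousAt).eventually (eventually_gt_nhds (by linarith))
        obtain ⟨δ', hδ', hball⟩ := Metric.eventually_nhds_iff_ball.mp (hev1.and hev2)
        have hε0 : 0 < min ((r - (f x₀ + r0)) / 2) (μ2 * δ' ^ 2) :=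
          lt_min hδ (by positivity)
        have hlt2 : (⨅ w, (g w + ((f (pf s) + (inner ℝ (gradient f (pf s)) (w - pf s) : ℝ)
            + 1 / (2 * γ) * ‖w - pf s‖ ^ 2 : ℝ) : EReal))) <
            (((f x₀ + r0) + min ((r - (f x₀ + r0)) / 2) (μ2 * δ' ^ 2) : ℝ) : EReal) := by
          rw [hφs, hm']
          exact EReal.coe_lt_coe_iff.mpr (by linarith)
        obtain ⟨w, hw⟩ := iInf_lt_iff.mp hlt2
        have hgwtop : g w ≠ ⊤ := by
          intro h; rw [h, EReal.top_add_coe] at hw; exact not_top_lt hw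
        obtain ⟨gw, hgw⟩ : ∃ gw : ℝ, g w = (gw : EReal) :=
          ⟨(g w).toReal, (EReal.coe_toReal hgwtop (hgbot w)).symm⟩
        rw [hgw, ← EReal.coe_add] at hw
        have hwR : gw + (f (pf s) + (inner ℝ (gradient f (pf s)) (w - pf s) : ℝ)
            + 1 / (2 * γ) * ‖w - pf s‖ ^ 2) <
            (f x₀ + r0) + min ((r - (f x₀ + r0)) / 2) (μ2 * δ' ^ 2) :=
          EReal.coe_lt_coe_iff.mp hw
        have hmlew : f x₀ + r0 ≤ f w + gw := by
          have h5 := hmle w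
          rw [hm', hgw, ← EReal.coe_add] at h5
          exact EReal.coe_le_coe_iff.mp h5
        have hstrong := hmodel_ge_strong s w
        have hsq : μ2 * ‖w - pf s‖ ^ 2 < min ((r - (f x₀ + r0)) / 2) (μ2 * δ' ^ 2) := by
          linarith
        have hn2 : ‖w - pf s‖ ^ 2 < δ' ^ 2 :=
          (mul_lt_mul_iff_right₀ hμ2).mp (lt_of_lt_of_le hsq (min_le_right _ _))
        have hwu : ‖w - pf s‖ < δ' := by nlinarith [norm_nonneg (w - pf s)]
        have hmem := hball w (by rwa [Metric.mem_ball, dist_eq_norm])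
        have hg1 : r - f (pf s) < gw := by
          have h6 : ((r - f (pf s) : ℝ) : EReal) < g w := hmem.1
          rw [hgw] at h6
          exact EReal.coe_lt_coe_iff.mp h6
        have hf1 := hmem.2
        have hεle1 : min ((r - (f x₀ + r0)) / 2) (μ2 * δ' ^ 2) ≤ (r - (f x₀ + r0)) / 2 :=
          min_le_left _ _
        have hfle := hmodel_ge s w
        linarith
      exact isMinOn_iff.mpr fun y _ => hkey.trans (hmle y)
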